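/- arXiv:2508.17312 — 2 statements merged into one kernel-verified Lean document; each statement's English description precedes it below -/
import Mathlib

section
/- Let L be an L-algebra and a ∈ L, a ≠ 1, and let l_a be the operator l_a(x) = a if x ≤ a and 1 otherwise. Then l_a is maximal among closure L-operators: if l' is a closure L-operator with l_a ≤ l' pointwise, then l' = l_a or l' = ω_L (the constant-1 operator). -/
/-- An L-algebra: a set with binary operation `arr` (→) and logical unit `one`. -/
class LAlg (L : Type) where
  arr : L → L → L
  one : L
  arr_self : ∀ x : L, arr x x = one
  arr_one : ∀ x : L, arr x one = one
  one_arr : ∀ x : L, arr one x = x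
  exch : ∀ x y z : L, arr (arr x y) (arr x z) = arr (arr y x) (arr y z)
  antisymm : ∀ x y : L, arr x y = one → arr y x = one → x = y

namespace LAlg

variable {L : Type} [LAlg L]

/-- The order on an L-algebra: `x ≤ y` iff `x → y = 1`. -/
def le (x y : L) : Prop := arr x y = one

/-- An L-operator: extensive, monotone, idempotent. -/
def IsOp (l : L → L) : Prop :=
  (∀ x : L, le x (l x)) ∧ (∀ x y : L, le x y → le (l x) (l y)) ∧ (∀ x : L, l (l x) = l x)

/-- A closure L-operator. -/
def IsClosureOp (l : L → L) : Prop :=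
  IsOp l ∧ ∀ x y : L, le (l (arr x y)) (arr (l x) (l y))

end LAlg

open LAlg Classical in
/-- l_a is maximal among closure L-operators. -/
theorem la_maximal {L : Type} [LAlg L] (a : L) (ha : a ≠ one)
    (l' : L → L) (hl' : IsClosureOp l')
    (hle : ∀ x : L, le ((fun x : L => if le x a then a else one) x) (l' x)) :
    (∀ x : L, l' x = (fun x : L => if le x a then a else one) x) ∨
    (∀ x : L, l' x = one) := by
  obtain ⟨⟨hext, hmono, hidem⟩, _hcl⟩ := hl'
  have hone : ∀ y : L, le one y → y = one := by
    intro y h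
    have := one_arr y
    rw [le] at h
    rw [h] at this
    exact this.symm
  have hnot : ∀ x : L, ¬ le x a → l' x = one := by
    intro x hx
    have := hle x
    simp only [if_neg hx] at this
    exact hone _ this
  by_cases hla : l' a = a
  · left
    intro x
    by_cases hx : le x a
    · simp only [if_pos hx]
      have h1 : le a (l' x) := by have := hle x; simpa [if_pos hx] using this
      have h2 : le (l' x) a := by
        have := hmono x a hx
        rwa [hla] at this
      exact antisymm _ _ h2 h1
    · simp only [if_neg hx]
      exact hnot x hx
  · right
    intro x
    by_cases hx : le x a
    · have h1 : le a (l' x) := by have := hle x; simpa [if_pos hx] using this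
      by_cases hc : le (l' x) a
      · exfalso
        have hca : l' x = a := antisymm _ _ hc h1
        apply hla
        have := hidem x
        rw [hca] at this
        exact this
      · have := hnot (l' x) hc
        rw [hidem x] at this
        exact this
    · exact hnot x hx
end

section
/- Let ξ and η be finite partitions of a bounded L-algebra L with state m having the Bayes property. Then H(ξ ∨ η) = H(ξ | η) + H(η), where H(ξ) = -Σᵢ m(xᵢ) log m(xᵢ) and H(ξ|η) = -Σᵢⱼ m(xᵢ⊙yⱼ) log(m(xᵢ⊙yⱼ)/m(yⱼ)) (omitting terms with m(yⱼ)=0). -/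
/-- A bounded L-algebra: an L-algebra with a least element `zero`. -/
class BLAlg (L : Type) where
  arr : L → L → L
  one : L
  zero : L
  arr_self : ∀ x : L, arr x x = one
  arr_one : ∀ x : L, arr x one = one
  one_arr : ∀ x : L, arr one x = x
  exch : ∀ x y z : L, arr (arr x y) (arr x z) = arr (arr y x) (arr y z)
  antisymm : ∀ x y : L, arr x y = one → arr y x = one → x = y
  zero_arr : ∀ x : L, arr zero x = one

namespace BLAlg

variable {L : Type} [BLAlg L]

/-- The order: `x ≤ y` iff `x → y = 1`. -/
def le (x y : L) : Prop := arr x y = one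

/-- `y' = y → 0`. -/
def neg (y : L) : L := arr y zero

/-- Orthogonality: `x ⊥ y` iff `x ≤ y'`. -/
def orth (x y : L) : Prop := le x (neg y)

/-- Orthogonal sum `x ⊕ y = y' → x`. -/
def oplus (x y : L) : L := arr (neg y) x

/-- Left-associated orthogonal sum of a finite family. -/
def osum : List L → L
  | [] => zero
  | x :: xs => xs.foldl oplus x

/-- A finite family is orthogonal if each partial sum is orthogonal to the next element. -/
def IsOrthList (l : List L) : Prop :=
  ∀ (k : ℕ) (h : k + 1 < l.length), orth (osum (l.take (k + 1))) (l[k + 1]'h)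

/-- A state on a bounded L-algebra. -/
structure IsState (m : L → ℝ) : Prop where
  nonneg : ∀ x : L, 0 ≤ m x
  le_one : ∀ x : L, m x ≤ 1
  map_one : m one = 1
  add : ∀ x y : L, orth x y → m (oplus x y) = m x + m y
  mono : ∀ x y : L, le x y → m x ≤ m y

/-- A finite partition of unity: a nonempty orthogonal family whose ⊕-sum has state 1. -/
def IsPartition (m : L → ℝ) (l : List L) : Prop :=
  l ≠ [] ∧ IsOrthList l ∧ m (osum l) = 1

/-- `od` is the operation `x ⊙ y = x − y'` when `y' ≤ x`, and `0` otherwise,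
where `x − y' = z` iff `x = z ⊕ y'`. -/
def IsOdot (od : L → L → L) : Prop :=
  ∀ x y : L, (le (neg y) x → x = oplus (od x y) (neg y)) ∧ (¬ le (neg y) x → od x y = zero)

/-- The Bayes property of a state: `Σᵢ m(xᵢ ⊙ y) = m(y)` for every partition and every `y`. -/
def Bayes (m : L → ℝ) (od : L → L → L) : Prop :=
  ∀ l : List L, IsPartition m l → ∀ y : L, (l.map fun x => m (od x y)).sum = m y

/-- Entropy of a finite partition: `H(ξ) = -Σ m(xᵢ) log m(xᵢ)`. -/
noncomputable def H (m : L → ℝ) (l : List L) : ℝ :=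
  -(l.map fun x => m x * Real.log (m x)).sum

open Classical in
/-- Conditional entropy `H(ξ | η) = -Σᵢⱼ m(xᵢ⊙yⱼ) log (m(xᵢ⊙yⱼ)/m(yⱼ))`,
omitting the terms with `m(yⱼ) = 0`. -/
noncomputable def Hc (m : L → ℝ) (od : L → L → L) (ξ η : List L) : ℝ :=
  -(ξ.map fun x =>
      (η.map fun y =>
        if m y = 0 then 0 else m (od x y) * Real.log (m (od x y) / m y)).sum).sum

/-- Common refinement `ξ ∨ η = {xᵢ ⊙ yⱼ}`. -/
def vee (od : L → L → L) (ξ η : List L) : List L :=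
  ξ.flatMap fun x => η.map fun y => od x y

/-- An L-dynamical system `(L, T, m)`: `T` is a →-homomorphism fixing 1 and 0 and
preserving the state `m`. -/
def IsDyn (m : L → ℝ) (T : L → L) : Prop :=
  (∀ a b : L, T (arr a b) = arr (T a) (T b)) ∧ T one = one ∧ T zero = zero ∧
    ∀ a : L, m (T a) = m a

/-- The iterated refinement `ref od T ξ n = ⋁_{i=0}^{n} Tⁱ(ξ)`. -/
def ref (od : L → L → L) (T : L → L) (ξ : List L) : ℕ → List L
  | 0 => ξ
  | n + 1 => vee od (ref od T ξ n) (ξ.map T^[n + 1])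

end BLAlg

private lemma list_sum_map_add' {α : Type*} (l : List α) (f g : α → ℝ) :
    (l.map fun a => f a + g a).sum = (l.map f).sum + (l.map g).sum := by
  induction l with
  | nil => simp
  | cons a t ih => simp [ih]; ring

private lemma list_sum_comm' {α β : Type*} (l1 : List α) (l2 : List β) (f : α → β → ℝ) :
    (l1.map fun a => (l2.map fun b => f a b).sum).sum
      = (l2.map fun b => (l1.map fun a => f a b).sum).sum := by
  induction l1 with
  | nil => simp
  | cons a l ih => simp [ih, list_sum_map_add']

private lemma list_sum_flatMap' {α β γ : Type*} [AddCommMonoid γ] (l : List α)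
    (f : α → List β) (g : β → γ) :
    ((l.flatMap f).map g).sum = (l.map fun a => ((f a).map g).sum).sum := by
  induction l with
  | nil => simp
  | cons a t ih => simp [List.flatMap_cons, ih]

private lemma list_sum_map_sub' {α : Type*} (l : List α) (f g : α → ℝ) :
    (l.map fun a => f a - g a).sum = (l.map f).sum - (l.map g).sum := by
  induction l with
  | nil => simp
  | cons a t ih => simp [ih]; ring

private lemma list_sum_map_mulr' {α : Type*} (l : List α) (f : α → ℝ) (c : ℝ) :
    (l.map fun a => f a * c).sum = (l.map f).sum * c := by
  induction l with
  | nil => simp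
  | cons a t ih => simp [ih]; ring

open BLAlg in
/-- H(ξ ∨ η) = H(ξ | η) + H(η). -/
theorem entropy_refinement {L : Type} [BLAlg L] (m : L → ℝ) (hm : IsState m)
    (od : L → L → L) (hod : IsOdot od) (hB : Bayes m od)
    (ξ η : List L) (hξ : IsPartition m ξ) (hη : IsPartition m η) :
    H m (vee od ξ η) = Hc m od ξ η + H m η := by
  classical
  have hB' : ∀ y : L, (ξ.map fun x => m (od x y)).sum = m y := fun y => hB ξ hξ y
  have hzero : ∀ y : L, m y = 0 → ∀ x ∈ ξ, m (od x y) = 0 := by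
    intro y hy x hx
    have hnn : ∀ r ∈ ξ.map fun x => m (od x y), 0 ≤ r := by
      intro r hr
      obtain ⟨x', _, rfl⟩ := List.mem_map.mp hr
      exact hm.nonneg _
    have hle := List.single_le_sum hnn (m (od x y)) (List.mem_map_of_mem (f := fun x => m (od x y)) hx)
    have := hm.nonneg (od x y)
    rw [hB' y, hy] at hle
    linarith
  unfold H Hc vee
  rw [list_sum_flatMap']
  simp only [List.map_map, Function.comp_def]
  rw [list_sum_comm' ξ η (fun x y => m (od x y) * Real.log (m (od x y))),
      list_sum_comm' ξ η (fun x y => if m y = 0 then 0 else m (od x y) * Real.log (m (od x y) / m y))]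
  rw [← neg_add, ← list_sum_map_add' η]
  congr 1
  refine congrArg List.sum (List.map_congr_left ?_)
  intro y _
  by_cases hy : m y = 0
  · simp only [hy, if_pos rfl]
    have h0 : (ξ.map fun x => m (od x y) * Real.log (m (od x y))).sum = 0 := by
      apply List.sum_eq_zero
      intro r hr
      obtain ⟨x, hx, rfl⟩ := List.mem_map.mp hr
      rw [hzero y hy x hx]; ring
    simp [h0, hy]
  · simp only [if_neg hy]
    have key : ∀ x : L, m (od x y) * Real.log (m (od x y) / m y)
        = m (od x y) * Real.log (m (od x y)) - m (od x y) * Real.log (m y) := by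
      intro x
      by_cases hx0 : m (od x y) = 0
      · simp [hx0]
      · rw [Real.log_div hx0 hy]; ring
    simp only [key]
    rw [list_sum_map_sub' ξ (fun x => m (od x y) * Real.log (m (od x y)))
        (fun x => m (od x y) * Real.log (m y)),
      list_sum_map_mulr' ξ (fun x => m (od x y)) (Real.log (m y)), hB' y]
    ring
end
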